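/- Let (θ, S, X) be an ample dynamical system. There is an injective algebra homomorphism φ: L_c(X) → L_c(X) ⋊ S such that φ(f) = f Δ_e whenever e ∈ E(S) and f ∈ L_c(X_e). -/

import Mathlib

/-- An inverse semigroup: a semigroup with an involution `star` such that
`a (star a) a = a`, `(star a) a (star a) = star a`, and idempotents commute. -/
class InverseSemigroup (S : Type*) extends Semigroup S, Star S where
  star_star : ∀ a : S, star (star a) = a
  mul_star_mul : ∀ a : S, a * star a * a = a
  star_mul_star : ∀ a : S, star a * a * star a = star a
  star_mul : ∀ a b : S, star (a * b) = star b * star a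
  idem_comm : ∀ e f : S, e * e = e → f * f = f → e * f = f * e

/-- The natural partial order on an inverse semigroup: `s ≤ t` iff `s = t e`
for some idempotent `e`. -/
def ISle {S : Type*} [InverseSemigroup S] (s t : S) : Prop :=
  ∃ e : S, e * e = e ∧ s = t * e

/-- An ample action of an inverse semigroup `S` on a topological space `X`:
a semigroup homomorphism `s ↦ θ s` into partial homeomorphisms between clopen
subsets of `X` (composition with largest domains encoded via
`PartialEquiv.trans` and `EqOnSource`), with `θ (star s) = (θ s).symm`, whose
domains cover `X`.  (For an ample dynamical system, `X` is moreover assumed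
locally compact, Hausdorff and totally disconnected.) -/
structure AmpleSystem (S X : Type*) [InverseSemigroup S] [TopologicalSpace X] where
  θ : S → PartialHomeomorph X X
  hom : ∀ s t : S, (θ (s * t)).toPartialEquiv.EqOnSource
    ((θ t).toPartialEquiv.trans (θ s).toPartialEquiv)
  star_eq : ∀ s : S, (θ (star s)).toPartialEquiv.EqOnSource (θ s).toPartialEquiv.symm
  clopen : ∀ s : S, IsClopen (θ s).source
  cover : ∀ x : X, ∃ s : S, x ∈ (θ s).source

variable (K : Type*) [Field K]

/-- `L_c(X)`: the locally constant, compactly supported `K`-valued functions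
on `X` (a non-unital commutative `K`-algebra under pointwise operations). -/
def LcSet (X : Type*) [TopologicalSpace X] : Set (X → K) :=
  {f | IsLocallyConstant f ∧ HasCompactSupport f}

variable {S X : Type*} [InverseSemigroup S] [TopologicalSpace X]

/-- The globally defined endomorphism `ᾱ_s` of `L_c(X)`:
`ᾱ_s(f) = α_s(f · 1_{X_{s*s}})`, i.e. `(ᾱ_s f)(x) = f (θ_{s*} x)` for
`x ∈ X_{s s*}` and `0` otherwise. -/
noncomputable def barAlpha (T : AmpleSystem S X) (s : S) (f : X → K) : X → K :=
  (T.θ s).target.indicator (fun x => f ((T.θ s).symm x))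

/-- The fiber `B_s = L_c(X_{s s*})` of the semi-direct product bundle:
elements of `L_c(X)` vanishing outside `X_{s s*} = ran θ_s`. -/
def FibSet (T : AmpleSystem S X) (s : S) : Set (X → K) :=
  {f | f ∈ LcSet K X ∧ ∀ x ∉ (T.θ s).target, f x = 0}

/-- `L_c(X_e)` for an idempotent `e`: elements of `L_c(X)` vanishing outside
`X_e = dom θ_e`. -/
def LcE (T : AmpleSystem S X) (e : S) : Set (X → K) :=
  {f | f ∈ LcSet K X ∧ ∀ x ∉ (T.θ e).source, f x = 0}

/-- A covariant representation `(π, σ)` of an ample dynamical system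
`(θ, S, X)` on a `K`-vector space `V`: a non-degenerate representation `π` of
`L_c(X)` and a semigroup homomorphism `σ : S → End(V)` with
`π (α_s f) = σ_s π(f) σ_{s*}` for `f ∈ L_c(X_{s*s})`, and
`span {π(f) ξ : f ∈ L_c(X_e)} = σ_e(V)` for each idempotent `e`.
(`π` is recorded as a map on all of `X → K`; only its values on `L_c(X)` are
constrained.) -/
structure CovRep (T : AmpleSystem S X) (V : Type*) [AddCommGroup V]
    [Module K V] where
  π : (X → K) → Module.End K V
  σ : S → Module.End K V
  π_add : ∀ f ∈ LcSet K X, ∀ g ∈ LcSet K X, π (f + g) = π f + π g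
  π_smul : ∀ (c : K), ∀ f ∈ LcSet K X, π (c • f) = c • π f
  π_mul : ∀ f ∈ LcSet K X, ∀ g ∈ LcSet K X, π (f * g) = π f * π g
  π_nondeg : Submodule.span K {ξ : V | ∃ f ∈ LcSet K X, ∃ η : V, ξ = π f η} = ⊤
  σ_hom : ∀ s t : S, σ (s * t) = σ s * σ t
  covariant : ∀ s : S, ∀ f ∈ LcE K T (star s * s),
    π (barAlpha K T s f) = σ s * π f * σ (star s)
  essential : ∀ e : S, e * e = e →
    Submodule.span K {ξ : V | ∃ f ∈ LcE K T e, ∃ η : V, ξ = π f η} =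
      LinearMap.range (σ e)

/-- The defining relations of the crossed product `L_c(X) ⋊ S`, imposed on the
free `K`-algebra on formal symbols `f δ_s` (`s ∈ S`, `f : X → K`): symbols with
`f ∉ L_c(X_{s s*})` are discarded, the symbols are `K`-linear in `f` on each
fiber, `(f δ_s)(g δ_t) = f ᾱ_s(g) δ_{s t}`, and `f δ_s = f δ_t` whenever
`s ≤ t` and `f ∈ L_c(X_{s s*})`.  The quotient is precisely the universal
(cross-sectional) algebra of the semi-direct product bundle `B^θ`. -/
inductive CPRel {S X : Type*} [InverseSemigroup S] [TopologicalSpace X]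
    (K : Type*) [Field K] (T : AmpleSystem S X) :
    FreeAlgebra K (S × (X → K)) → FreeAlgebra K (S × (X → K)) → Prop
  | zero (s : S) (f : X → K) : f ∉ FibSet K T s →
      CPRel K T (FreeAlgebra.ι K (s, f)) 0
  | add (s : S) (f g : X → K) : f ∈ FibSet K T s → g ∈ FibSet K T s →
      CPRel K T (FreeAlgebra.ι K (s, f + g))
        (FreeAlgebra.ι K (s, f) + FreeAlgebra.ι K (s, g))
  | smul (s : S) (c : K) (f : X → K) : f ∈ FibSet K T s →
      CPRel K T (FreeAlgebra.ι K (s, c • f)) (c • FreeAlgebra.ι K (s, f))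
  | mul (s t : S) (f g : X → K) : f ∈ FibSet K T s → g ∈ FibSet K T t →
      CPRel K T (FreeAlgebra.ι K (s, f) * FreeAlgebra.ι K (t, g))
        (FreeAlgebra.ι K (s * t, f * barAlpha K T s g))
  | incl (s t : S) (f : X → K) : ISle s t → f ∈ FibSet K T s →
      CPRel K T (FreeAlgebra.ι K (s, f)) (FreeAlgebra.ι K (t, f))

/-- The crossed product algebra `L_c(X) ⋊ S` of an ample dynamical system. -/
abbrev CP {S X : Type*} [InverseSemigroup S] [TopologicalSpace X]
    (K : Type*) [Field K] (T : AmpleSystem S X) :=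
  RingQuot (CPRel K T)

/-- The element `f Δ_s` of the crossed product `L_c(X) ⋊ S`. -/
noncomputable def Delta {S X : Type*} [InverseSemigroup S] [TopologicalSpace X]
    (K : Type*) [Field K] (T : AmpleSystem S X) (s : S) (f : X → K) :
    CP K T :=
  RingQuot.mkAlgHom K (CPRel K T) (FreeAlgebra.ι K (s, f))

section Helpers

open Classical

variable {K' S X : Type*} [InverseSemigroup S] [TopologicalSpace X]

lemma IS.star_idem {e : S} (he : e * e = e) : star e = e := by
  have h1 : star e * star e = star e := by
    have h := InverseSemigroup.star_mul e e
    rw [he] at h; exact h.symm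
  have hc := InverseSemigroup.idem_comm e (star e) he h1
  have h2 := InverseSemigroup.mul_star_mul e
  have h3 := InverseSemigroup.star_mul_star e
  have he' : e = star e * e := by
    calc e = e * star e * e := h2.symm
    _ = e * (star e * e) := by rw [mul_assoc]
    _ = e * (e * star e) := by rw [hc]
    _ = e * e * star e := by rw [mul_assoc]
    _ = e * star e := by rw [he]
    _ = star e * e := hc
  calc star e = star e * e * star e := h3.symm
    _ = star e * (e * star e) := by rw [mul_assoc]
    _ = star e * (star e * e) := by rw [hc]
    _ = star e * star e * e := by rw [mul_assoc]
    _ = star e * e := by rw [h1]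
    _ = e := he'.symm

lemma IS.starMulSelf_idem (s : S) : (star s * s) * (star s * s) = star s * s := by
  have h := InverseSemigroup.star_mul_star s
  calc (star s * s) * (star s * s) = (star s * s * star s) * s := by
        rw [mul_assoc, mul_assoc, mul_assoc]
    _ = star s * s := by rw [h]

lemma IS.mul_idem {e f : S} (he : e * e = e) (hf : f * f = f) :
    (e * f) * (e * f) = e * f := by
  have hc := InverseSemigroup.idem_comm e f he hf
  calc (e * f) * (e * f) = e * (f * e) * f := by rw [mul_assoc, mul_assoc, mul_assoc]
    _ = e * (e * f) * f := by rw [hc]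
    _ = (e * e) * (f * f) := by rw [mul_assoc, mul_assoc, mul_assoc]
    _ = e * f := by rw [he, hf]

namespace AmpleSystem

variable (T : AmpleSystem S X)

lemma source_star (s : S) : (T.θ (star s)).source = (T.θ s).target :=
  (T.star_eq s).1

lemma target_clopen (s : S) : IsClopen (T.θ s).target :=
  T.source_star s ▸ T.clopen (star s)

lemma idem_target_eq {e : S} (he : e * e = e) :
    (T.θ e).target = (T.θ e).source := by
  rw [← T.source_star e, IS.star_idem he]

lemma idem_apply_target {e : S} (he : e * e = e) {y : X}
    (hy : y ∈ (T.θ e).target) : T.θ e y = y := by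
  have h := T.hom e e
  rw [he] at h
  have hsy : (T.θ e).symm y ∈ (T.θ e).source := (T.θ e).map_target hy
  have h2 := h.2 hsy
  simp only [PartialEquiv.trans_apply, PartialHomeomorph.coe_toPartialEquiv] at h2
  rw [(T.θ e).right_inv hy] at h2
  exact h2.symm

lemma idem_apply_source {e : S} (he : e * e = e) {x : X}
    (hx : x ∈ (T.θ e).source) : T.θ e x = x :=
  T.idem_apply_target he (by rwa [T.idem_target_eq he])

lemma idem_symm_apply {e : S} (he : e * e = e) {x : X}
    (hx : x ∈ (T.θ e).source) : (T.θ e).symm x = x := by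
  have h := (T.θ e).left_inv hx
  rwa [T.idem_apply_source he hx] at h

lemma idem_symm_apply' {e : S} (he : e * e = e) {x : X}
    (hx : x ∈ (T.θ e).target) : (T.θ e).symm x = x :=
  T.idem_symm_apply he (by rwa [T.idem_target_eq he] at hx)

lemma source_mul_idem {e f : S} (he : e * e = e) (hf : f * f = f) :
    (T.θ (e * f)).source = (T.θ e).source ∩ (T.θ f).source := by
  have h := (T.hom e f).1
  rw [PartialEquiv.trans_source] at h
  simp only [PartialHomeomorph.coe_toPartialEquiv] at h
  rw [h]
  ext x
  constructor
  · rintro ⟨hxf, hxe⟩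
    refine ⟨?_, hxf⟩
    have : (T.θ f : X → X) x ∈ (T.θ e).source := hxe
    rwa [T.idem_apply_source hf hxf] at this
  · rintro ⟨hxe, hxf⟩
    refine ⟨hxf, ?_⟩
    show (T.θ f : X → X) x ∈ (T.θ e).source
    rwa [T.idem_apply_source hf hxf]

lemma source_starMulSelf (s : S) :
    (T.θ (star s * s)).source = (T.θ s).source := by
  have h := (T.hom (star s) s).1
  rw [PartialEquiv.trans_source, T.source_star s] at h
  rw [h]
  exact Set.inter_eq_self_of_subset_left fun x hx => (T.θ s).map_source hx

lemma target_mul (s t : S) :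
    (T.θ (s * t)).target = (T.θ s).target ∩ (T.θ s).symm ⁻¹' (T.θ t).target := by
  have h := (PartialEquiv.EqOnSource.symm' (T.hom s t)).1
  rw [PartialEquiv.symm_source, PartialEquiv.symm_source,
    PartialEquiv.trans_target] at h
  exact h

lemma symm_mul_apply (s t : S) {x : X} (hx : x ∈ (T.θ (s * t)).target) :
    (T.θ (s * t)).symm x = (T.θ t).symm ((T.θ s).symm x) := by
  have h := PartialEquiv.EqOnSource.symm' (T.hom s t)
  have hx' : x ∈ (T.θ (s * t)).toPartialEquiv.symm.source := hx
  have h2 := h.2 hx'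
  rw [show ((T.θ (s*t)).toPartialEquiv.symm : X → X) x = (T.θ (s*t)).symm x from rfl] at h2
  rw [h2]
  simp [PartialEquiv.trans_symm_eq_symm_trans_symm]

lemma le_target_subset {s t : S} (h : ISle s t) :
    (T.θ s).target ⊆ (T.θ t).target := by
  obtain ⟨e, he, rfl⟩ := h
  rw [T.target_mul t e]
  exact Set.inter_subset_left

lemma le_symm_apply {s t : S} (h : ISle s t) {x : X}
    (hx : x ∈ (T.θ s).target) : (T.θ s).symm x = (T.θ t).symm x := by
  obtain ⟨e, he, rfl⟩ := h
  have hx' := hx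
  rw [T.target_mul t e] at hx'
  rw [T.symm_mul_apply t e hx]
  exact T.idem_symm_apply' he hx'.2

end AmpleSystem

end Helpers
section Funcs

open Classical Set

variable {K S X : Type*} [Field K] [InverseSemigroup S] [TopologicalSpace X]

lemma LcSet.zero_mem : (0 : X → K) ∈ LcSet K X :=
  ⟨IsLocallyConstant.const 0, by
    have : Function.support (0 : X → K) = ∅ := Function.support_zero
    rw [HasCompactSupport, tsupport, this, closure_empty]
    exact isCompact_empty⟩

lemma LcSet.add_mem {f g : X → K} (hf : f ∈ LcSet K X) (hg : g ∈ LcSet K X) :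
    f + g ∈ LcSet K X := ⟨hf.1.add hg.1, hf.2.add hg.2⟩

lemma LcSet.smul_mem (c : K) {f : X → K} (hf : f ∈ LcSet K X) :
    c • f ∈ LcSet K X := by
  refine ⟨?_, ?_⟩
  · have : c • f = fun x => c * f x := rfl
    rw [this]
    exact (IsLocallyConstant.const c).mul hf.1
  · refine hf.2.mono ?_
    intro x hx
    simp only [Function.mem_support] at hx ⊢
    intro h0
    exact hx (by show c * f x = 0; rw [h0, mul_zero])

lemma LcSet.neg_mem {f : X → K} (hf : f ∈ LcSet K X) : -f ∈ LcSet K X := by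
  have : -f = (-1 : K) • f := by funext x; simp
  rw [this]; exact LcSet.smul_mem _ hf

lemma LcSet.mul_mem {f g : X → K} (hf : f ∈ LcSet K X) (hg : g ∈ LcSet K X) :
    f * g ∈ LcSet K X := ⟨hf.1.mul hg.1, hf.2.mul_right⟩

lemma isLocallyConstant_indicator {U : Set X} (hU : IsClopen U) {f : X → K}
    (hf : IsLocallyConstant f) : IsLocallyConstant (U.indicator f) := by
  rw [IsLocallyConstant.iff_exists_open]
  intro x
  by_cases hx : x ∈ U
  · obtain ⟨V, hV, hxV, hVf⟩ := (IsLocallyConstant.iff_exists_open f).1 hf x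
    exact ⟨V ∩ U, hV.inter hU.isOpen, ⟨hxV, hx⟩, fun y hy => by
      rw [Set.indicator_of_mem hy.2, Set.indicator_of_mem hx, hVf y hy.1]⟩
  · exact ⟨Uᶜ, hU.compl.isOpen, hx, fun y hy => by
      rw [Set.indicator_of_notMem hy, Set.indicator_of_notMem hx]⟩

lemma LcSet.indicator_mem {U : Set X} (hU : IsClopen U) {f : X → K}
    (hf : f ∈ LcSet K X) : U.indicator f ∈ LcSet K X := by
  refine ⟨isLocallyConstant_indicator hU hf.1, hf.2.mono ?_⟩
  intro x hx
  simp only [Function.mem_support] at hx ⊢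
  intro h0
  exact hx (by by_cases h : x ∈ U <;>
    simp [Set.indicator_of_mem, Set.indicator_of_notMem, h, h0])

lemma LcSet.indicator_one_mem {A : Set X} (hA : IsClopen A) (hc : IsCompact A) :
    A.indicator (fun _ => (1 : K)) ∈ LcSet K X := by
  refine ⟨isLocallyConstant_indicator hA (IsLocallyConstant.const 1), ?_⟩
  rw [HasCompactSupport, tsupport]
  have hsupp : Function.support (A.indicator (fun _ => (1 : K))) = A := by
    ext x
    simp only [Function.mem_support]
    by_cases h : x ∈ A <;>
      simp [Set.indicator_of_mem, Set.indicator_of_notMem, h]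
  rw [hsupp, hA.isClosed.closure_eq]
  exact hc

lemma barAlpha_locallyConstant (T : AmpleSystem S X) (s : S) {g : X → K}
    (hg : IsLocallyConstant g) : IsLocallyConstant (barAlpha K T s g) := by
  rw [IsLocallyConstant.iff_exists_open]
  intro x
  by_cases hx : x ∈ (T.θ s).target
  · obtain ⟨W, hW, hxW, hWg⟩ :=
      (IsLocallyConstant.iff_exists_open g).1 hg ((T.θ s).symm x)
    refine ⟨(T.θ s).symm.source ∩ (T.θ s).symm ⁻¹' W,
      (T.θ s).symm.continuousOn.isOpen_inter_preimage (T.target_clopen s).isOpen hW, ⟨hx, hxW⟩, fun y hy => ?_⟩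
    have hy1 : y ∈ (T.θ s).target := hy.1
    rw [barAlpha, Set.indicator_of_mem hy1, Set.indicator_of_mem hx]
    exact hWg _ hy.2
  · refine ⟨(T.θ s).targetᶜ, (T.target_clopen s).compl.isOpen, hx,
      fun y hy => ?_⟩
    rw [barAlpha, Set.indicator_of_notMem hy, Set.indicator_of_notMem hx]

lemma barAlpha_idem (T : AmpleSystem S X) {e : S} (he : e * e = e) (f : X → K) :
    barAlpha K T e f = ((T.θ e).source).indicator f := by
  funext x
  by_cases hx : x ∈ (T.θ e).source
  · rw [barAlpha, T.idem_target_eq he, Set.indicator_of_mem hx,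
      Set.indicator_of_mem hx, T.idem_symm_apply he hx]
  · rw [barAlpha, T.idem_target_eq he, Set.indicator_of_notMem hx,
      Set.indicator_of_notMem hx]

lemma FibSet_idem (T : AmpleSystem S X) {e : S} (he : e * e = e) :
    FibSet K T e = LcE K T e := by
  simp only [FibSet, LcE, T.idem_target_eq he]

lemma LcE.zero_mem (T : AmpleSystem S X) (e : S) : (0 : X → K) ∈ LcE K T e :=
  ⟨LcSet.zero_mem, fun _ _ => rfl⟩

lemma LcE.add_mem {T : AmpleSystem S X} {e : S} {f g : X → K}
    (hf : f ∈ LcE K T e) (hg : g ∈ LcE K T e) : f + g ∈ LcE K T e :=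
  ⟨LcSet.add_mem hf.1 hg.1, fun x hx => by
    show f x + g x = 0; rw [hf.2 x hx, hg.2 x hx, add_zero]⟩

lemma LcE.smul_mem {T : AmpleSystem S X} {e : S} (c : K) {f : X → K}
    (hf : f ∈ LcE K T e) : c • f ∈ LcE K T e :=
  ⟨LcSet.smul_mem c hf.1, fun x hx => by
    show c * f x = 0; rw [hf.2 x hx, mul_zero]⟩

lemma LcE.neg_mem {T : AmpleSystem S X} {e : S} {f : X → K}
    (hf : f ∈ LcE K T e) : -f ∈ LcE K T e :=
  ⟨LcSet.neg_mem hf.1, fun x hx => by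
    show -(f x) = 0; rw [hf.2 x hx, neg_zero]⟩

lemma LcE.sum_mem {T : AmpleSystem S X} {e : S} {ι : Type*} (u : Finset ι)
    (g : ι → X → K) (hg : ∀ i ∈ u, g i ∈ LcE K T e) :
    (∑ i ∈ u, g i) ∈ LcE K T e := by
  induction u using Finset.cons_induction with
  | empty => simpa using LcE.zero_mem T e
  | cons a u ha ih =>
    rw [Finset.sum_cons]
    exact LcE.add_mem (hg a (Finset.mem_cons_self a u))
      (ih fun i hi => hg i (Finset.mem_cons_of_mem hi))

lemma Delta_add (T : AmpleSystem S X) (s : S) {f g : X → K}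
    (hf : f ∈ FibSet K T s) (hg : g ∈ FibSet K T s) :
    Delta K T s (f + g) = Delta K T s f + Delta K T s g := by
  have h := RingQuot.mkAlgHom_rel K (CPRel.add s f g hf hg)
  rw [map_add] at h
  exact h

lemma Delta_smul (T : AmpleSystem S X) (s : S) (c : K) {f : X → K}
    (hf : f ∈ FibSet K T s) : Delta K T s (c • f) = c • Delta K T s f := by
  have h := RingQuot.mkAlgHom_rel K (CPRel.smul s c f hf)
  rw [map_smul] at h
  exact h

lemma zero_mem_FibSet (T : AmpleSystem S X) (s : S) :
    (0 : X → K) ∈ FibSet K T s := ⟨LcSet.zero_mem, fun _ _ => rfl⟩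

lemma Delta_zero (T : AmpleSystem S X) (s : S) : Delta K T s 0 = 0 := by
  have h := Delta_smul T s (0 : K) (zero_mem_FibSet T s)
  rw [zero_smul, zero_smul] at h
  exact h

lemma Delta_neg (T : AmpleSystem S X) (s : S) {f : X → K}
    (hf : f ∈ FibSet K T s) : Delta K T s (-f) = -Delta K T s f := by
  have h := Delta_smul T s (-1 : K) hf
  have e1 : (-1 : K) • f = -f := by funext x; simp
  rw [e1, neg_one_smul K (Delta K T s f)] at h
  exact h

lemma Delta_congr (T : AmpleSystem S X) {e e' : S} (he : e * e = e)
    (he' : e' * e' = e') {f : X → K} (hf : f ∈ LcE K T e)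
    (hf' : f ∈ LcE K T e') : Delta K T e f = Delta K T e' f := by
  have hee' : (e * e') * (e * e') = e * e' := IS.mul_idem he he'
  have hfm : f ∈ FibSet K T (e * e') := by
    refine ⟨hf.1, fun x hx => ?_⟩
    rw [T.idem_target_eq hee', T.source_mul_idem he he'] at hx
    rcases (not_and_or.1 hx) with h | h
    · exact hf.2 x h
    · exact hf'.2 x h
  have h1 := RingQuot.mkAlgHom_rel K (CPRel.incl (e * e') e f ⟨e', he', rfl⟩ hfm)
  have h2 := RingQuot.mkAlgHom_rel K
    (CPRel.incl (e * e') e' f ⟨e, he, InverseSemigroup.idem_comm e e' he he'⟩ hfm)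
  exact h1.symm.trans h2

lemma Delta_sum (T : AmpleSystem S X) {e : S} (he : e * e = e) {ι : Type*}
    (u : Finset ι) (g : ι → X → K) (hg : ∀ i ∈ u, g i ∈ LcE K T e) :
    Delta K T e (∑ i ∈ u, g i) = ∑ i ∈ u, Delta K T e (g i) := by
  induction u using Finset.cons_induction with
  | empty => rw [Finset.sum_empty, Finset.sum_empty]; exact Delta_zero T e
  | cons a u ha ih =>
    have h1 : g a ∈ FibSet K T e := by
      rw [FibSet_idem T he]; exact hg a (Finset.mem_cons_self a u)
    have h2 : (∑ i ∈ u, g i) ∈ FibSet K T e := by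
      rw [FibSet_idem T he]
      exact LcE.sum_mem u g fun i hi => hg i (Finset.mem_cons_of_mem hi)
    rw [Finset.sum_cons, Finset.sum_cons, Delta_add T e h1 h2,
      ih fun i hi => hg i (Finset.mem_cons_of_mem hi)]

end Funcs
section Rep

open Classical

variable {K S X : Type*} [Field K] [InverseSemigroup S] [TopologicalSpace X]

lemma FibSet.add_mem {T : AmpleSystem S X} {s : S} {f g : X → K}
    (hf : f ∈ FibSet K T s) (hg : g ∈ FibSet K T s) : f + g ∈ FibSet K T s :=
  ⟨LcSet.add_mem hf.1 hg.1, fun x hx => by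
    show f x + g x = 0; rw [hf.2 x hx, hg.2 x hx, add_zero]⟩

lemma FibSet.smul_mem {T : AmpleSystem S X} {s : S} (c : K) {f : X → K}
    (hf : f ∈ FibSet K T s) : c • f ∈ FibSet K T s :=
  ⟨LcSet.smul_mem c hf.1, fun x hx => by
    show c * f x = 0; rw [hf.2 x hx, mul_zero]⟩

noncomputable def opEnd (T : AmpleSystem S X) (s : S) (f : X → K) :
    Module.End K (X → K) where
  toFun ξ := f * barAlpha K T s ξ
  map_add' ξ η := by
    funext x
    simp only [Pi.mul_apply, Pi.add_apply, barAlpha]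
    by_cases hx : x ∈ (T.θ s).target
    · simp only [Set.indicator_of_mem hx, Pi.add_apply]; ring
    · simp only [Set.indicator_of_notMem hx]; ring
  map_smul' c ξ := by
    funext x
    simp only [Pi.mul_apply, Pi.smul_apply, barAlpha, RingHom.id_apply,
      smul_eq_mul]
    by_cases hx : x ∈ (T.θ s).target
    · simp only [Set.indicator_of_mem hx, Pi.smul_apply, smul_eq_mul]; ring
    · simp only [Set.indicator_of_notMem hx]; ring

lemma opEnd_apply (T : AmpleSystem S X) (s : S) (f ξ : X → K) :
    opEnd T s f ξ = f * barAlpha K T s ξ := rfl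

lemma opEnd_add_left (T : AmpleSystem S X) (s : S) (f g : X → K) :
    opEnd T s (f + g) = opEnd T s f + opEnd T s g := by
  apply LinearMap.ext; intro ξ; funext x
  simp only [opEnd_apply, LinearMap.add_apply, Pi.mul_apply, Pi.add_apply]
  ring

lemma opEnd_smul_left (T : AmpleSystem S X) (s : S) (c : K) (f : X → K) :
    opEnd T s (c • f) = c • opEnd T s f := by
  apply LinearMap.ext; intro ξ; funext x
  simp only [opEnd_apply, LinearMap.smul_apply, Pi.mul_apply, Pi.smul_apply,
    smul_eq_mul]
  ring

lemma fib_mul_mem (T : AmpleSystem S X) (s t : S) {f g : X → K}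
    (hf : f ∈ FibSet K T s) (hg : g ∈ FibSet K T t) :
    f * barAlpha K T s g ∈ FibSet K T (s * t) := by
  refine ⟨⟨hf.1.1.mul (barAlpha_locallyConstant T s hg.1.1),
    hf.1.2.mul_right⟩, ?_⟩
  intro x hx
  rw [T.target_mul s t] at hx
  show f x * barAlpha K T s g x = 0
  by_cases h1 : x ∈ (T.θ s).target
  · have h2 : (T.θ s).symm x ∉ (T.θ t).target := fun h => hx ⟨h1, h⟩
    rw [barAlpha, Set.indicator_of_mem h1, hg.2 _ h2, mul_zero]
  · rw [barAlpha, Set.indicator_of_notMem h1, mul_zero]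

lemma opEnd_mul (T : AmpleSystem S X) (s t : S) {f g : X → K}
    (hf : f ∈ FibSet K T s) (hg : g ∈ FibSet K T t) :
    opEnd T s f * opEnd T t g = opEnd T (s * t) (f * barAlpha K T s g) := by
  apply LinearMap.ext; intro ξ; funext x
  simp only [Module.End.mul_apply, opEnd_apply, Pi.mul_apply]
  by_cases h1 : x ∈ (T.θ s).target
  · by_cases h2 : (T.θ s).symm x ∈ (T.θ t).target
    · have hst : x ∈ (T.θ (s * t)).target := by
        rw [T.target_mul]; exact ⟨h1, h2⟩
      simp only [barAlpha, Set.indicator_of_mem h1, Set.indicator_of_mem hst,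
        Pi.mul_apply, Set.indicator_of_mem h2]
      rw [T.symm_mul_apply s t hst]
      ring
    · have hst : x ∉ (T.θ (s * t)).target := fun h => by
        rw [T.target_mul] at h; exact h2 h.2
      simp only [barAlpha, Set.indicator_of_mem h1, Pi.mul_apply,
        Set.indicator_of_notMem h2, Set.indicator_of_notMem hst, mul_zero]
  · have hst : x ∉ (T.θ (s * t)).target := fun h => by
      rw [T.target_mul] at h; exact h1 h.1
    simp only [barAlpha, Set.indicator_of_notMem h1,
      Set.indicator_of_notMem hst, mul_zero]

lemma fib_le_mem {T : AmpleSystem S X} {s t : S} (h : ISle s t) {f : X → K}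
    (hf : f ∈ FibSet K T s) : f ∈ FibSet K T t :=
  ⟨hf.1, fun x hx => hf.2 x fun h' => hx (T.le_target_subset h h')⟩

lemma opEnd_le {T : AmpleSystem S X} {s t : S} (h : ISle s t) {f : X → K}
    (hf : f ∈ FibSet K T s) : opEnd T s f = opEnd T t f := by
  apply LinearMap.ext; intro ξ; funext x
  simp only [opEnd_apply, Pi.mul_apply]
  by_cases h1 : x ∈ (T.θ s).target
  · have h2 : x ∈ (T.θ t).target := T.le_target_subset h h1
    simp only [barAlpha, Set.indicator_of_mem h1, Set.indicator_of_mem h2,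
      T.le_symm_apply h h1]
  · rw [hf.2 x h1, zero_mul, zero_mul]

noncomputable def genMap (T : AmpleSystem S X) :
    S × (X → K) → Module.End K (X → K) := fun p =>
  if p.2 ∈ FibSet K T p.1 then opEnd T p.1 p.2 else 0

lemma cprel_lift {T : AmpleSystem S X} {x y : FreeAlgebra K (S × (X → K))}
    (h : CPRel K T x y) :
    (FreeAlgebra.lift K (genMap T)) x = (FreeAlgebra.lift K (genMap T)) y := by
  cases h with
  | zero s f hf =>
    simp only [FreeAlgebra.lift_ι_apply, genMap, if_neg hf, map_zero]
  | add s f g hf hg =>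
    simp only [map_add, FreeAlgebra.lift_ι_apply, genMap,
      if_pos (FibSet.add_mem hf hg), if_pos hf, if_pos hg]
    exact opEnd_add_left T s f g
  | smul s c f hf =>
    simp only [map_smul, FreeAlgebra.lift_ι_apply, genMap,
      if_pos (FibSet.smul_mem c hf), if_pos hf]
    exact opEnd_smul_left T s c f
  | mul s t f g hf hg =>
    simp only [map_mul, FreeAlgebra.lift_ι_apply, genMap, if_pos hf, if_pos hg,
      if_pos (fib_mul_mem T s t hf hg)]
    exact opEnd_mul T s t hf hg
  | incl s t f hle hf =>
    simp only [FreeAlgebra.lift_ι_apply, genMap, if_pos hf,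
      if_pos (fib_le_mem hle hf)]
    exact opEnd_le hle hf

noncomputable def Psi (T : AmpleSystem S X) :
    CP K T →ₐ[K] Module.End K (X → K) :=
  RingQuot.liftAlgHom K ⟨FreeAlgebra.lift K (genMap T),
    fun _ _ h => cprel_lift h⟩

lemma Psi_Delta (T : AmpleSystem S X) (s : S) {f : X → K}
    (hf : f ∈ FibSet K T s) : Psi T (Delta K T s f) = opEnd T s f := by
  rw [Psi, Delta, RingQuot.liftAlgHom_mkAlgHom_apply]
  simp only [FreeAlgebra.lift_ι_apply, genMap, if_pos hf]

lemma Psi_Delta_one (T : AmpleSystem S X) {e : S} (he : e * e = e) {f : X → K}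
    (hf : f ∈ LcE K T e) :
    Psi T (Delta K T e f) (fun _ => (1 : K)) = f := by
  have hf' : f ∈ FibSet K T e := by rw [FibSet_idem T he]; exact hf
  rw [Psi_Delta T e hf', opEnd_apply, barAlpha_idem T he]
  funext x
  by_cases hx : x ∈ (T.θ e).source
  · simp only [Pi.mul_apply, Set.indicator_of_mem hx, mul_one]
  · rw [Pi.mul_apply, Set.indicator_of_notMem hx, mul_zero, hf.2 x hx]

end Rep
section Decomp

open Classical

variable {K S X : Type*} [Field K] [InverseSemigroup S] [TopologicalSpace X]

lemma decomp_zero_sum (T : AmpleSystem S X) {ι : Type*} [Fintype ι]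
    (e : ι → S) (g : ι → X → K)
    (hp : ∀ i, e i * e i = e i ∧ g i ∈ LcE K T (e i))
    (h0 : ∑ i, g i = 0) :
    ∑ i, Delta K T (e i) (g i) = 0 := by
  classical
  set v : X → ι → K := fun x i => g i x with hv
  set K0 : Set X := ⋃ i, tsupport (g i) with hK0
  have hK0c : IsCompact K0 := isCompact_iUnion fun i => (hp i).2.1.2
  have hopen : ∀ w : ι → K, IsOpen (v ⁻¹' {w}) := by
    intro w
    have hq : v ⁻¹' {w} = ⋂ i, (g i) ⁻¹' {w i} := by
      ext x
      simp only [Set.mem_preimage, Set.mem_singleton_iff, Set.mem_iInter,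
        funext_iff, hv]
    rw [hq]
    exact isOpen_iInter_of_finite fun i => (hp i).2.1.1 _
  have hclosed : ∀ w : ι → K, IsClosed (v ⁻¹' {w}) := by
    intro w
    have hq : (v ⁻¹' {w})ᶜ = ⋃ i, (g i) ⁻¹' ({w i}ᶜ) := by
      ext x
      simp only [Set.mem_compl_iff, Set.mem_preimage, Set.mem_singleton_iff,
        Set.mem_iUnion, funext_iff, hv, not_forall]
    rw [← isOpen_compl_iff, hq]
    exact isOpen_iUnion fun i => (hp i).2.1.1 _
  have hcov : K0 ⊆ ⋃ x : X, v ⁻¹' {v x} := fun x _ => Set.mem_iUnion.2 ⟨x, rfl⟩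
  obtain ⟨t, ht⟩ := hK0c.elim_finite_subcover (fun x : X => v ⁻¹' {v x})
    (fun x => hopen _) hcov
  have hVfin : (v '' K0).Finite := by
    apply (t.finite_toSet.image v).subset
    rintro _ ⟨x, hx, rfl⟩
    obtain ⟨x', hx't, hx'⟩ := Set.mem_iUnion₂.1 (ht hx)
    exact ⟨x', hx't, (Set.mem_singleton_iff.1 hx').symm⟩
  set V : Finset (ι → K) := hVfin.toFinset.filter (fun w => w ≠ 0) with hV
  set A : (ι → K) → Set X := fun w => v ⁻¹' {w} with hA
  set indOne : (ι → K) → X → K := fun w => (A w).indicator (fun _ => (1:K))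
    with hio
  have hAsub : ∀ w : ι → K, w ≠ 0 → A w ⊆ K0 := by
    intro w hw x hx
    have hvx : v x = w := hx
    obtain ⟨i, hi⟩ := Function.ne_iff.1 hw
    have hgi : g i x ≠ 0 := by
      have : g i x = w i := by rw [← hvx]
      rw [this]; exact hi
    exact Set.mem_iUnion.2 ⟨i, subset_tsupport _ hgi⟩
  have hind : ∀ w ∈ V, indOne w ∈ LcSet K X := by
    intro w hw
    have hw0 : w ≠ 0 := (Finset.mem_filter.1 hw).2
    exact LcSet.indicator_one_mem ⟨hclosed w, hopen w⟩
      (hK0c.of_isClosed_subset (hclosed w) (hAsub w hw0))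
  have key : ∀ w ∈ V, ∀ j : ι, w j ≠ 0 → indOne w ∈ LcE K T (e j) := by
    intro w hw j hj
    refine ⟨hind w hw, fun x hx => ?_⟩
    by_cases hxA : x ∈ A w
    · exfalso
      have hz := (hp j).2.2 x hx
      have hvw : v x = w := hxA
      apply hj
      rw [← hvw]
      exact hz
    · exact Set.indicator_of_notMem hxA _
  have hmem : ∀ w ∈ V, ∀ i, w i • indOne w ∈ LcE K T (e i) := by
    intro w hw i
    by_cases hwi : w i = 0
    · rw [hwi, zero_smul]; exact LcE.zero_mem T _
    · exact LcE.smul_mem _ (key w hw i hwi)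
  have hgdecomp : ∀ i, g i = ∑ w ∈ V, w i • indOne w := by
    intro i; funext x
    have hmain : (∑ w ∈ V, w i • indOne w) x = g i x := by
      rw [Finset.sum_apply, Finset.sum_eq_single (v x)]
      · have hxA : x ∈ A (v x) := rfl
        show v x i • (A (v x)).indicator (fun _ => (1:K)) x = g i x
        rw [Set.indicator_of_mem hxA]
        show v x i * 1 = g i x
        rw [mul_one]
      · intro w hw hne
        have hxA : x ∉ A w := fun h => hne ((show v x = w from h) ▸ rfl)
        show w i • (A w).indicator (fun _ => (1:K)) x = 0
        rw [Set.indicator_of_notMem hxA, smul_zero]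
      · intro hvx
        show v x i • (A (v x)).indicator (fun _ => (1:K)) x = 0
        rcases eq_or_ne (v x) 0 with h0' | h0'
        · have : v x i = 0 := by rw [h0']; rfl
          rw [this, zero_smul]
        · exfalso
          apply hvx
          rw [hV, Finset.mem_filter]
          exact ⟨hVfin.mem_toFinset.2 ⟨x, hAsub _ h0' rfl, rfl⟩, h0'⟩
    exact hmain.symm
  calc ∑ i, Delta K T (e i) (g i)
      = ∑ i, ∑ w ∈ V, Delta K T (e i) (w i • indOne w) := by
        refine Finset.sum_congr rfl fun i _ => ?_
        rw [hgdecomp i]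
        exact Delta_sum T (hp i).1 V _ (fun w hw => hmem w hw i)
    _ = ∑ w ∈ V, ∑ i, Delta K T (e i) (w i • indOne w) := Finset.sum_comm
    _ = 0 := by
        refine Finset.sum_eq_zero fun w hw => ?_
        have hw0 : w ≠ 0 := (Finset.mem_filter.1 hw).2
        obtain ⟨j, hj⟩ := Function.ne_iff.1 hw0
        have hstep : ∀ i, Delta K T (e i) (w i • indOne w)
            = Delta K T (e j) (w i • indOne w) := by
          intro i
          by_cases hwi : w i = 0
          · rw [hwi, zero_smul, Delta_zero T, Delta_zero T]
          · exact Delta_congr T (hp i).1 (hp j).1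
              (LcE.smul_mem _ (key w hw i hwi)) (LcE.smul_mem _ (key w hw j hj))
        rw [Finset.sum_congr rfl fun i _ => hstep i,
          ← Delta_sum T (hp j).1 Finset.univ _
            (fun i _ => LcE.smul_mem _ (key w hw j hj))]
        have hsm : ∑ i : ι, w i • indOne w = (∑ i, w i) • indOne w :=
          (Finset.sum_smul).symm
        have hx0 : ∑ i, w i = 0 := by
          have hwV := (Finset.mem_filter.1 hw).1
          obtain ⟨x, hxK, hxv⟩ := hVfin.mem_toFinset.1 hwV
          rw [← hxv]
          have h1 : ∑ i, v x i = (∑ i, g i) x := by rw [Finset.sum_apply]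
          rw [h1, h0]
          rfl
        rw [hsm, hx0, zero_smul, Delta_zero]

end Decomp
section Phi

open Classical

variable {K S X : Type*} [Field K] [InverseSemigroup S] [TopologicalSpace X]

lemma decomp_sum_eq (T : AmpleSystem S X) {ι κ : Type*} [Fintype ι] [Fintype κ]
    (e : ι → S) (g : ι → X → K)
    (hp : ∀ i, e i * e i = e i ∧ g i ∈ LcE K T (e i))
    (e' : κ → S) (g' : κ → X → K)
    (hp' : ∀ j, e' j * e' j = e' j ∧ g' j ∈ LcE K T (e' j))
    (hsum : ∑ i, g i = ∑ j, g' j) :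
    ∑ i, Delta K T (e i) (g i) = ∑ j, Delta K T (e' j) (g' j) := by
  classical
  have hz := decomp_zero_sum T (Sum.elim e e')
    (Sum.elim g (fun j => -(g' j)))
    (by
      rintro (i | j)
      · exact hp i
      · exact ⟨(hp' j).1, LcE.neg_mem (hp' j).2⟩)
    (by
      rw [Fintype.sum_sum_type]
      simp only [Sum.elim_inl, Sum.elim_inr]
      rw [hsum, Finset.sum_neg_distrib]
      exact add_neg_cancel _)
  rw [Fintype.sum_sum_type] at hz
  simp only [Sum.elim_inl, Sum.elim_inr] at hz
  have hneg : ∀ j : κ, Delta K T (e' j) (-(g' j)) = -Delta K T (e' j) (g' j) :=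
    fun j => Delta_neg T (e' j)
      (by rw [FibSet_idem T (hp' j).1]; exact (hp' j).2)
  rw [Finset.sum_congr rfl fun j _ => hneg j, Finset.sum_neg_distrib] at hz
  exact add_neg_eq_zero.mp hz

noncomputable def phi (T : AmpleSystem S X) (f : X → K) : CP K T :=
  if h : ∃ p : (n : ℕ) × (Fin n → S) × (Fin n → X → K),
      (∀ i, p.2.1 i * p.2.1 i = p.2.1 i ∧ p.2.2 i ∈ LcE K T (p.2.1 i)) ∧
      ∑ i, p.2.2 i = f
  then ∑ i, Delta K T (h.choose.2.1 i) (h.choose.2.2 i)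
  else 0

lemma phi_eq (T : AmpleSystem S X) {f : X → K} {ι : Type*} [Fintype ι]
    (e : ι → S) (g : ι → X → K)
    (hp : ∀ i, e i * e i = e i ∧ g i ∈ LcE K T (e i))
    (hsum : ∑ i, g i = f) :
    phi T f = ∑ i, Delta K T (e i) (g i) := by
  classical
  have hex : ∃ p : (n : ℕ) × (Fin n → S) × (Fin n → X → K),
      (∀ i, p.2.1 i * p.2.1 i = p.2.1 i ∧ p.2.2 i ∈ LcE K T (p.2.1 i)) ∧
      ∑ i, p.2.2 i = f := by
    obtain σ := Fintype.equivFin ι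
    refine ⟨⟨Fintype.card ι, e ∘ σ.symm, g ∘ σ.symm⟩, fun i => hp _, ?_⟩
    rw [← hsum]
    exact Equiv.sum_comp σ.symm g
  rw [phi, dif_pos hex]
  obtain ⟨hps, hsum'⟩ := hex.choose_spec
  exact decomp_sum_eq T _ _ hps e g hp (hsum'.trans hsum.symm)

lemma exists_decomp_aux (T : AmpleSystem S X) (t : Finset S)
    (hid : ∀ s ∈ t, s * s = s) (f : X → K) (hf : f ∈ LcSet K X)
    (hv : ∀ x, x ∉ (⋃ s ∈ t, (T.θ s).source) → f x = 0) :
    ∃ (n : ℕ) (e : Fin n → S) (g : Fin n → X → K),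
      (∀ i, e i * e i = e i ∧ g i ∈ LcE K T (e i)) ∧ ∑ i, g i = f := by
  classical
  revert hid f
  induction t using Finset.cons_induction with
  | empty =>
    intro _ f hf hv
    refine ⟨0, Fin.elim0, Fin.elim0, fun i => i.elim0, ?_⟩
    funext x
    have h0 : f x = 0 := hv x (by simp)
    simp [h0]
  | cons a t ha ih =>
    intro hid f hf hv
    have hU : IsClopen (T.θ a).source := T.clopen a
    set f2 := ((T.θ a).source)ᶜ.indicator f with hf2def
    have hf1 : (T.θ a).source.indicator f ∈ LcE K T a :=
      ⟨LcSet.indicator_mem hU hf, fun x hx => Set.indicator_of_notMem hx _⟩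
    have hf2 : f2 ∈ LcSet K X := LcSet.indicator_mem hU.compl hf
    have hv2 : ∀ x, x ∉ (⋃ s ∈ t, (T.θ s).source) → f2 x = 0 := by
      intro x hx
      by_cases hxa : x ∈ (T.θ a).source
      · exact Set.indicator_of_notMem (by simp [hxa]) _
      · have hxn : x ∉ ⋃ s ∈ Finset.cons a t ha, (T.θ s).source := by
          intro hmem
          obtain ⟨s, hs, hxs⟩ := Set.mem_iUnion₂.1 hmem
          rcases Finset.mem_cons.1 hs with rfl | hs'
          · exact hxa hxs
          · exact hx (Set.mem_iUnion₂.2 ⟨s, hs', hxs⟩)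
        rw [hf2def, Set.indicator_of_mem (Set.mem_compl hxa)]
        exact hv x hxn
    obtain ⟨n, e, g, hp, hsum⟩ :=
      ih (fun s hs => hid s (Finset.mem_cons_of_mem hs)) f2 hf2 hv2
    refine ⟨n + 1, Fin.cons a e, Fin.cons ((T.θ a).source.indicator f) g,
      ?_, ?_⟩
    · intro i
      refine Fin.cases ?_ ?_ i
      · exact ⟨hid a (Finset.mem_cons_self a t), hf1⟩
      · intro j
        simpa using hp j
    · rw [Fin.sum_cons, hsum]
      funext x
      by_cases hxa : x ∈ (T.θ a).source
      · show (T.θ a).source.indicator f x + f2 x = f x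
        rw [Set.indicator_of_mem hxa, hf2def,
          Set.indicator_of_notMem (by simp [hxa]), add_zero]
      · show (T.θ a).source.indicator f x + f2 x = f x
        rw [Set.indicator_of_notMem hxa, hf2def,
          Set.indicator_of_mem (Set.mem_compl hxa), zero_add]

lemma exists_decomp (T : AmpleSystem S X) {f : X → K} (hf : f ∈ LcSet K X) :
    ∃ (n : ℕ) (e : Fin n → S) (g : Fin n → X → K),
      (∀ i, e i * e i = e i ∧ g i ∈ LcE K T (e i)) ∧ ∑ i, g i = f := by
  classical
  have hcov : tsupport f ⊆ ⋃ s : S, (T.θ (star s * s)).source := by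
    intro x _
    obtain ⟨s, hs⟩ := T.cover x
    exact Set.mem_iUnion.2 ⟨s, by rw [T.source_starMulSelf s]; exact hs⟩
  obtain ⟨t, ht⟩ := (hf.2 : IsCompact (tsupport f)).elim_finite_subcover
    (fun s : S => (T.θ (star s * s)).source)
    (fun s => (T.clopen _).isOpen) hcov
  refine exists_decomp_aux T (t.image fun s => star s * s) ?_ f hf ?_
  · intro s hs
    obtain ⟨s', _, rfl⟩ := Finset.mem_image.1 hs
    exact IS.starMulSelf_idem s'
  · intro x hx
    apply image_eq_zero_of_notMem_tsupport
    intro hxt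
    obtain ⟨s, hst, hxs⟩ := Set.mem_iUnion₂.1 (ht hxt)
    exact hx (Set.mem_iUnion₂.2
      ⟨star s * s, Finset.mem_image_of_mem _ hst, hxs⟩)

end Phi
/-- There is an injective algebra homomorphism
`φ : L_c(X) → L_c(X) ⋊ S` with `φ(f) = f Δ_e` whenever `e ∈ E(S)` and
`f ∈ L_c(X_e)`.  (`φ` is recorded as a map on all of `X → K`; homomorphism
properties and injectivity are asserted on `L_c(X)`.) -/
theorem lc_embeds_in_crossed_product
    {K S X : Type*} [Field K] [InverseSemigroup S] [TopologicalSpace X]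
    (T : AmpleSystem S X) :
    ∃ φ : (X → K) → CP K T,
      (∀ f ∈ LcSet K X, ∀ g ∈ LcSet K X, φ (f + g) = φ f + φ g) ∧
      (∀ (c : K), ∀ f ∈ LcSet K X, φ (c • f) = c • φ f) ∧
      (∀ f ∈ LcSet K X, ∀ g ∈ LcSet K X, φ (f * g) = φ f * φ g) ∧
      (∀ f ∈ LcSet K X, ∀ g ∈ LcSet K X, φ f = φ g → f = g) ∧
      (∀ e : S, e * e = e → ∀ f ∈ LcE K T e, φ f = Delta K T e f) := by

  classical
  have key : ∀ h : X → K, h ∈ LcSet K X →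
      Psi T (phi T h) (fun _ => (1 : K)) = h := by
    intro h hh
    obtain ⟨n, e, g, hp, hsum⟩ := exists_decomp T hh
    calc Psi T (phi T h) (fun _ => (1 : K))
        = Psi T (∑ i, Delta K T (e i) (g i)) (fun _ => (1 : K)) := by
          rw [phi_eq T e g hp hsum]
      _ = ∑ i, Psi T (Delta K T (e i) (g i)) (fun _ => (1 : K)) := by
          rw [map_sum, LinearMap.sum_apply]
      _ = ∑ i, g i := Finset.sum_congr rfl fun i _ =>
          Psi_Delta_one T (hp i).1 (hp i).2
      _ = h := hsum
  refine ⟨phi T, ?_, ?_, ?_, ?_, ?_⟩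
  · intro f hf g hg
    obtain ⟨n, e, gg, hp, hsum⟩ := exists_decomp T hf
    obtain ⟨m, e', gg', hp', hsum'⟩ := exists_decomp T hg
    have hcomb : ∑ x : Fin n ⊕ Fin m, Sum.elim gg gg' x = f + g := by
      rw [Fintype.sum_sum_type]
      simp only [Sum.elim_inl, Sum.elim_inr, hsum, hsum']
    rw [phi_eq T (Sum.elim e e') (Sum.elim gg gg')
        (by rintro (i | j); exacts [hp i, hp' j]) hcomb,
      phi_eq T e gg hp hsum, phi_eq T e' gg' hp' hsum',
      Fintype.sum_sum_type]
    simp only [Sum.elim_inl, Sum.elim_inr]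
  · intro c f hf
    obtain ⟨n, e, g, hp, hsum⟩ := exists_decomp T hf
    have hp2 : ∀ i, e i * e i = e i ∧ c • g i ∈ LcE K T (e i) :=
      fun i => ⟨(hp i).1, LcE.smul_mem c (hp i).2⟩
    have hsum2 : ∑ i, c • g i = c • f := by rw [← Finset.smul_sum, hsum]
    rw [phi_eq T e _ hp2 hsum2, phi_eq T e g hp hsum, Finset.smul_sum]
    exact Finset.sum_congr rfl fun i _ => Delta_smul T (e i) c
      (by rw [FibSet_idem T (hp i).1]; exact (hp i).2)
  · intro f hf g hg
    obtain ⟨n, e, gg, hp, hsum⟩ := exists_decomp T hf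
    obtain ⟨m, e', gg', hp', hsum'⟩ := exists_decomp T hg
    have hpE : ∀ p : Fin n × Fin m,
        (e p.1 * e' p.2) * (e p.1 * e' p.2) = e p.1 * e' p.2 ∧
        gg p.1 * gg' p.2 ∈ LcE K T (e p.1 * e' p.2) := by
      intro p
      refine ⟨IS.mul_idem (hp p.1).1 (hp' p.2).1,
        ⟨LcSet.mul_mem (hp p.1).2.1 (hp' p.2).2.1, ?_⟩⟩
      intro x hx
      rw [T.source_mul_idem (hp p.1).1 (hp' p.2).1] at hx
      show gg p.1 x * gg' p.2 x = 0
      rcases not_and_or.1 hx with h | h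
      · rw [(hp p.1).2.2 x h, zero_mul]
      · rw [(hp' p.2).2.2 x h, mul_zero]
    have hsumE : ∑ p : Fin n × Fin m, gg p.1 * gg' p.2 = f * g := by
      rw [Fintype.sum_prod_type, ← hsum, ← hsum', Finset.sum_mul_sum]
    rw [phi_eq T (fun p : Fin n × Fin m => e p.1 * e' p.2)
        (fun p => gg p.1 * gg' p.2) hpE hsumE,
      phi_eq T e gg hp hsum, phi_eq T e' gg' hp' hsum',
      Finset.sum_mul_sum, Fintype.sum_prod_type]
    refine Finset.sum_congr rfl fun i _ => Finset.sum_congr rfl fun j _ => ?_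
    have hfib1 : gg i ∈ FibSet K T (e i) := by
      rw [FibSet_idem T (hp i).1]; exact (hp i).2
    have hfib2 : gg' j ∈ FibSet K T (e' j) := by
      rw [FibSet_idem T (hp' j).1]; exact (hp' j).2
    have hrel := RingQuot.mkAlgHom_rel K
      (CPRel.mul (e i) (e' j) (gg i) (gg' j) hfib1 hfib2)
    rw [map_mul] at hrel
    have hfun : gg i * barAlpha K T (e i) (gg' j) = gg i * gg' j := by
      funext x
      rw [barAlpha_idem T (hp i).1]
      by_cases hx : x ∈ (T.θ (e i)).source
      · show gg i x * _ = gg i x * gg' j x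
        rw [Set.indicator_of_mem hx]
      · show gg i x * _ = gg i x * gg' j x
        rw [(hp i).2.2 x hx, zero_mul, zero_mul]
    rw [hfun] at hrel
    exact hrel.symm
  · intro f hf g hg hfg
    have h1 := key f hf
    have h2 := key g hg
    rw [← h1, ← h2, hfg]
  · intro e he f hf
    have h := phi_eq T (f := f) (ι := Unit) (fun _ => e) (fun _ => f)
      (fun _ => ⟨he, hf⟩) (Fintype.sum_unique _)
    exact h.trans (Fintype.sum_unique _)
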